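/- Let U ⊆ ℝⁿ be a linear subspace, let c ∈ U^⊥, and let α, μ > 1. Define the affine map A : ℝⁿ → ℝⁿ by A(x) = P_U(x) + α·(P_{U^⊥}(x) − c) + c, where P_U and P_{U^⊥} denote the orthogonal projections onto U and U^⊥, and set C := A(conv((μ·(Bⁿ ∩ U) + c) ∪ Bⁿ)), the image under A of the convex hull of (μ·(Bⁿ ∩ U) + c) ∪ Bⁿ. Then Bⁿ ⊆ C, and every point x ∈ Bⁿ lying on the boundary of C satisfies ⟨c, x⟩ > 0. -/

import Mathlib

open scoped InnerProductSpace

set_option maxHeartbeats 2000000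

/-- the stretching lemma (Lemma on the affine map `A`): the unit
ball stays inside the stretched hull, and common boundary points have positive
inner product with `c`. -/
theorem stmt17 (n : ℕ)
    (U : Submodule ℝ (EuclideanSpace ℝ (Fin n)))
    (c : EuclideanSpace ℝ (Fin n)) (hc : c ∈ Uᗮ)
    (α μ : ℝ) (hα : 1 < α) (hμ : 1 < μ)
    (A : EuclideanSpace ℝ (Fin n) → EuclideanSpace ℝ (Fin n))
    (hA : ∀ x, A x = (U.orthogonalProjectionOnto x : EuclideanSpace ℝ (Fin n))
      + α • (((Uᗮ).orthogonalProjectionOnto x : EuclideanSpace ℝ (Fin n)) - c) + c)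
    (C : Set (EuclideanSpace ℝ (Fin n)))
    (hC : C = A '' (convexHull ℝ
      (((fun y => μ • y + c) '' (Metric.closedBall 0 1 ∩ (U : Set (EuclideanSpace ℝ (Fin n)))))
        ∪ Metric.closedBall 0 1))) :
    Metric.closedBall 0 1 ⊆ C ∧
    ∀ x ∈ Metric.closedBall (0 : EuclideanSpace ℝ (Fin n)) 1,
      x ∈ frontier C → 0 < ⟪c, x⟫_ℝ := by
  have hα0 : (0:ℝ) < α := by linarith
  have hμ0 : (0:ℝ) < μ := by linarith
  have hαne : α ≠ 0 := ne_of_gt hα0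
  have hμne : μ ≠ 0 := ne_of_gt hμ0
  set β : ℝ := α⁻¹ with hβdef
  have hαβ : α * β = 1 := by rw [hβdef]; exact mul_inv_cancel₀ hαne
  have hβ0 : 0 < β := by rw [hβdef]; exact inv_pos.mpr hα0
  have hβ1 : β < 1 := by
    linarith [mul_pos (show (0:ℝ) < α - 1 by linarith) hβ0, hαβ]
  set t : ℝ := 1 - β with htdef
  have ht0 : 0 < t := by rw [htdef]; linarith
  have ht1 : t < 1 := by rw [htdef]; linarith
  -- projection computation lemmas
  have hprojU : ∀ a ∈ U, ∀ b ∈ Uᗮ,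
      (U.orthogonalProjectionOnto (a + b) : EuclideanSpace ℝ (Fin n)) = a := by
    intro a ha b hb
    have h1 : (U.orthogonalProjectionOnto a : EuclideanSpace ℝ (Fin n)) = a :=
      Submodule.starProjection_eq_self_iff.mpr ha
    have h2 : U.orthogonalProjectionOnto b = 0 :=
      Submodule.orthogonalProjectionOnto_apply_of_mem_orthogonal hb
    rw [map_add, Submodule.coe_add, h1, h2, Submodule.coe_zero, add_zero]
  have hprojV : ∀ a ∈ U, ∀ b ∈ Uᗮ,
      ((Uᗮ).orthogonalProjectionOnto (a + b) : EuclideanSpace ℝ (Fin n)) = b := by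
    intro a ha b hb
    have h1 : ((Uᗮ).orthogonalProjectionOnto b : EuclideanSpace ℝ (Fin n)) = b :=
      Submodule.starProjection_eq_self_iff.mpr hb
    have h2 : (Uᗮ).orthogonalProjectionOnto a = 0 :=
      Submodule.orthogonalProjectionOnto_apply_of_mem_orthogonal
        (Submodule.le_orthogonal_orthogonal U ha)
    rw [map_add, Submodule.coe_add, h1, h2, Submodule.coe_zero, zero_add]
  -- continuity
  have hcontp1 : Continuous fun z : EuclideanSpace ℝ (Fin n) =>
      (U.orthogonalProjectionOnto z : EuclideanSpace ℝ (Fin n)) :=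
    (U.orthogonalProjectionOnto).continuous.subtype_val
  have hcontp2 : Continuous fun z : EuclideanSpace ℝ (Fin n) =>
      ((Uᗮ).orthogonalProjectionOnto z : EuclideanSpace ℝ (Fin n)) :=
    ((Uᗮ).orthogonalProjectionOnto).continuous.subtype_val
  have hAcont : Continuous A := by
    have hfun : A = fun z : EuclideanSpace ℝ (Fin n) =>
        (U.orthogonalProjectionOnto z : EuclideanSpace ℝ (Fin n))
          + α • (((Uᗮ).orthogonalProjectionOnto z : EuclideanSpace ℝ (Fin n)) - c) + c := funext hA
    rw [hfun]
    exact (hcontp1.add (((hcontp2.sub continuous_const)).const_smul α)).add continuous_const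
  set Ai : EuclideanSpace ℝ (Fin n) → EuclideanSpace ℝ (Fin n) :=
    fun z => (U.orthogonalProjectionOnto z : EuclideanSpace ℝ (Fin n))
      + β • (((Uᗮ).orthogonalProjectionOnto z : EuclideanSpace ℝ (Fin n)) - c) + c with hAidef
  have hAicont : Continuous Ai :=
    (hcontp1.add (((hcontp2.sub continuous_const)).const_smul β)).add continuous_const
  -- the key affine computation
  have haffine : ∀ γ δ : ℝ, γ * δ = 1 → ∀ z : EuclideanSpace ℝ (Fin n),
      (U.orthogonalProjectionOnto
          ((U.orthogonalProjectionOnto z : EuclideanSpace ℝ (Fin n))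
            + γ • (((Uᗮ).orthogonalProjectionOnto z : EuclideanSpace ℝ (Fin n)) - c) + c)
        : EuclideanSpace ℝ (Fin n))
        + δ • (((Uᗮ).orthogonalProjectionOnto
            ((U.orthogonalProjectionOnto z : EuclideanSpace ℝ (Fin n))
              + γ • (((Uᗮ).orthogonalProjectionOnto z : EuclideanSpace ℝ (Fin n)) - c) + c)
          : EuclideanSpace ℝ (Fin n)) - c) + c = z := by
    intro γ δ hγδ z
    have hq : (U.orthogonalProjectionOnto z : EuclideanSpace ℝ (Fin n)) ∈ U :=
      (U.orthogonalProjectionOnto z).2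
    have hv : ((Uᗮ).orthogonalProjectionOnto z : EuclideanSpace ℝ (Fin n)) ∈ Uᗮ :=
      ((Uᗮ).orthogonalProjectionOnto z).2
    have hzz : (U.orthogonalProjectionOnto z : EuclideanSpace ℝ (Fin n)) + ((Uᗮ).orthogonalProjectionOnto z : EuclideanSpace ℝ (Fin n)) = z := U.starProjection_add_starProjection_orthogonal z
    set q : EuclideanSpace ℝ (Fin n) := (U.orthogonalProjectionOnto z : EuclideanSpace ℝ (Fin n))
    set v : EuclideanSpace ℝ (Fin n) := ((Uᗮ).orthogonalProjectionOnto z : EuclideanSpace ℝ (Fin n))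
    have hmem : γ • (v - c) + c ∈ Uᗮ :=
      Submodule.add_mem _ (Submodule.smul_mem _ _ (Submodule.sub_mem _ hv hc)) hc
    have h1 : q + γ • (v - c) + c = q + (γ • (v - c) + c) := by abel
    rw [h1, hprojU q hq _ hmem, hprojV q hq _ hmem, add_sub_cancel_right, smul_smul,
      mul_comm δ γ, hγδ, one_smul, ← hzz]
    abel
  have hAiA : ∀ z, Ai (A z) = z := by
    intro z
    simp only [hAidef]
    rw [hA]
    exact haffine α β hαβ z
  have hAAi : ∀ z, A (Ai z) = z := by
    intro z
    rw [hA]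
    simp only [hAidef]
    exact haffine β α (by rw [mul_comm]; exact hαβ) z
  have hopen : IsOpenMap A := by
    let e : EuclideanSpace ℝ (Fin n) ≃ₜ EuclideanSpace ℝ (Fin n) :=
      { toFun := A, invFun := Ai, left_inv := hAiA, right_inv := hAAi,
        continuous_toFun := hAcont, continuous_invFun := hAicont }
    exact e.isOpenMap
  set K : Set (EuclideanSpace ℝ (Fin n)) := convexHull ℝ
      (((fun y => μ • y + c) '' (Metric.closedBall 0 1 ∩ (U : Set (EuclideanSpace ℝ (Fin n)))))
        ∪ Metric.closedBall 0 1) with hKdef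
  subst hC
  have hKconv : Convex ℝ K := convex_convexHull ℝ _
  have hBK : Metric.closedBall (0 : EuclideanSpace ℝ (Fin n)) 1 ⊆ K :=
    Set.Subset.trans Set.subset_union_right (subset_convexHull ℝ _)
  have hballK : Metric.ball (0 : EuclideanSpace ℝ (Fin n)) 1 ⊆ interior K := by
    rw [← interior_closedBall (0 : EuclideanSpace ℝ (Fin n)) one_ne_zero]
    exact interior_mono hBK
  have hSK : ∀ u : EuclideanSpace ℝ (Fin n), ‖u‖ ≤ 1 → u ∈ U → μ • u + c ∈ K := by
    intro u h1 h2
    exact subset_convexHull ℝ _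
      (Set.mem_union_left _ ⟨u, ⟨mem_closedBall_zero_iff.mpr h1, h2⟩, rfl⟩)
  -- the key construction
  have key : ∀ x : EuclideanSpace ℝ (Fin n), ‖x‖ ≤ 1 →
      ∃ y, y ∈ K ∧ A y = x ∧ (⟪c, x⟫_ℝ ≤ 0 → y ∈ interior K) := by
    intro x hx
    have hqU : (U.orthogonalProjectionOnto x : EuclideanSpace ℝ (Fin n)) ∈ U :=
      (U.orthogonalProjectionOnto x).2
    have hvV : ((Uᗮ).orthogonalProjectionOnto x : EuclideanSpace ℝ (Fin n)) ∈ Uᗮ :=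
      ((Uᗮ).orthogonalProjectionOnto x).2
    have hzz : (U.orthogonalProjectionOnto x : EuclideanSpace ℝ (Fin n)) + ((Uᗮ).orthogonalProjectionOnto x : EuclideanSpace ℝ (Fin n)) = x := U.starProjection_add_starProjection_orthogonal x
    set q : EuclideanSpace ℝ (Fin n) := (U.orthogonalProjectionOnto x : EuclideanSpace ℝ (Fin n))
      with hqdef
    set v : EuclideanSpace ℝ (Fin n) := ((Uᗮ).orthogonalProjectionOnto x : EuclideanSpace ℝ (Fin n))
      with hvdef
    -- hzz : q + v = x
    have hqv : ⟪q, v⟫_ℝ = 0 := (Submodule.mem_orthogonal U v).mp hvV q hqU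
    have hqc : ⟪q, c⟫_ℝ = 0 := (Submodule.mem_orthogonal U c).mp hc q hqU
    have hvq : ⟪v, q⟫_ℝ = 0 := by rw [real_inner_comm]; exact hqv
    have hcq : ⟪c, q⟫_ℝ = 0 := by rw [real_inner_comm]; exact hqc
    have expand : ∀ r1 r2 : ℝ, ‖q + (r1 • v + r2 • c)‖^2
        = ‖q‖^2 + (r1^2 * ‖v‖^2 + r2^2 * ‖c‖^2 + 2*(r1*r2)*⟪v, c⟫_ℝ) := by
      intro r1 r2
      simp only [← real_inner_self_eq_norm_sq]
      simp only [inner_add_left, inner_add_right, real_inner_smul_left, real_inner_smul_right,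
        hqv, hqc, hvq, hcq, real_inner_comm c v]
      ring
    have hnx : ‖q‖^2 + ‖v‖^2 = ‖x‖^2 := by
      have h1 : x = q + ((1:ℝ) • v + (0:ℝ) • c) := by rw [← hzz]; module
      rw [h1, expand 1 0]
      ring
    have hx2 : ‖x‖^2 ≤ 1 := pow_le_one₀ (norm_nonneg x) hx
    have hnq : ‖q‖ ≤ 1 := by
      have hq2 : ‖q‖^2 ≤ 1 := by linarith [sq_nonneg (‖v‖)]
      exact (pow_le_one_iff_of_nonneg (norm_nonneg q) two_ne_zero).mp hq2
    have hpK : q + c ∈ K := by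
      have h1 : ‖μ⁻¹ • q‖ ≤ 1 := by
        rw [norm_smul, Real.norm_eq_abs, abs_of_pos (inv_pos.mpr hμ0)]
        have hμi : μ⁻¹ ≤ 1 := by
          rw [inv_le_one_iff₀]; right; exact hμ.le
        calc μ⁻¹ * ‖q‖ ≤ μ⁻¹ * 1 := by
              exact mul_le_mul_of_nonneg_left hnq (inv_pos.mpr hμ0).le
          _ ≤ 1 := by linarith
      have h2 := hSK (μ⁻¹ • q) h1 (Submodule.smul_mem U _ hqU)
      rwa [smul_smul, mul_inv_cancel₀ hμne, one_smul] at h2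
    refine ⟨q + (β • v + t • c), ?_, ?_, ?_⟩
    · have hycombo : q + (β • v + t • c) = t • (q + c) + (1 - t) • x := by
        rw [← hzz, htdef]; module
      rw [hycombo]
      exact hKconv hpK (hBK (mem_closedBall_zero_iff.mpr hx)) ht0.le (by linarith) (by ring)
    · rw [hA]
      have hmem : β • v + t • c ∈ Uᗮ :=
        Submodule.add_mem _ (Submodule.smul_mem _ _ hvV) (Submodule.smul_mem _ _ hc)
      rw [hprojU q hqU _ hmem, hprojV q hqU _ hmem, ← hzz, htdef]
      match_scalars
      · ring
      · linear_combination hαβ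
      · linear_combination -hαβ
    · intro hcx0
      have hcx : ⟪c, x⟫_ℝ = ⟪v, c⟫_ℝ := by
        rw [← hzz, inner_add_right, hcq, zero_add, real_inner_comm]
      have hg : ⟪v, c⟫_ℝ ≤ 0 := by rw [← hcx]; exact hcx0
      by_cases hN : 0 < 1 - ‖x‖^2 + ‖v‖^2 - ⟪v, c⟫_ℝ
      · -- main case
        set M : ℝ := ‖v‖^2 + ‖c‖^2 - 2*⟪v, c⟫_ℝ with hMdef
        have hM0 : 0 ≤ M := by
          rw [hMdef]; linarith [sq_nonneg (‖v‖), sq_nonneg (‖c‖)]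
        set s : ℝ := min t ((1 - ‖x‖^2 + ‖v‖^2 - ⟪v, c⟫_ℝ)/(M+1)) with hsdef
        have hs0 : 0 < s := lt_min ht0 (div_pos hN (by linarith))
        have hst : s ≤ t := min_le_left _ _
        have hs1 : s < 1 := lt_of_le_of_lt hst ht1
        have hsN : s * (M+1) ≤ 1 - ‖x‖^2 + ‖v‖^2 - ⟪v, c⟫_ℝ :=
          (le_div_iff₀ (by linarith)).mp (min_le_right _ _)
        have hw2 : ‖q + ((1-s) • v + s • c)‖^2 < 1 := by
          rw [expand]
          have p1 : s * (s * (M+1)) ≤ s * (1 - ‖x‖^2 + ‖v‖^2 - ⟪v, c⟫_ℝ) :=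
            mul_le_mul_of_nonneg_left hsN hs0.le
          have p2 : 0 ≤ (1 - s) * (1 - ‖x‖^2) :=
            mul_nonneg (by linarith) (by linarith)
          have p3 : 0 ≤ s * ‖v‖^2 := mul_nonneg hs0.le (sq_nonneg _)
          have p4 : 0 ≤ s * (-⟪v, c⟫_ℝ) := mul_nonneg hs0.le (by linarith)
          have p5 : 0 < s * s := mul_pos hs0 hs0
          rw [hMdef] at p1
          nlinarith [p1, p2, p3, p4, p5]
        set w : EuclideanSpace ℝ (Fin n) := q + ((1-s) • v + s • c) with hwdef
        have hwint : w ∈ interior K :=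
          hballK (mem_ball_zero_iff.mpr
            ((pow_lt_one_iff_of_nonneg (norm_nonneg w) two_ne_zero).mp hw2))
        set a : ℝ := (t - s)/(1 - s) with hadef
        have h1s : (0:ℝ) < 1 - s := by linarith
        have ha0 : 0 ≤ a := div_nonneg (by linarith) h1s.le
        have ha1 : a < 1 := (div_lt_one h1s).mpr (by linarith)
        have hcombA : (1-a) * (1-s) = 1 - t := by
          rw [hadef]; field_simp; ring
        have hcombB : (1-a) * s + a = t := by
          rw [hadef]; field_simp; ring
        have hyform : q + (β • v + t • c) = (1-a) • w + a • (q + c) := by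
          have h2 : (1-a) • w + a • (q+c)
              = ((1-a)*s + a) • (q + c) + ((1-a)*(1-s)) • x := by
            rw [hwdef, ← hzz]; module
          rw [h2, hcombA, hcombB, ← hzz, htdef]; module
        rw [hyform]
        exact hKconv.combo_interior_self_mem_interior hwint hpK (by linarith) ha0 (by ring)
      · -- degenerate case : x is a unit vector of U
        push_neg at hN
        have hv2 : ‖v‖^2 ≤ 0 := by linarith
        have hveq : v = 0 := by
          have h0 : ‖v‖^2 = 0 := le_antisymm hv2 (sq_nonneg _)
          exact norm_eq_zero.mp ((pow_eq_zero_iff two_ne_zero).mp h0)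
        have h1 : ‖x‖^2 = 1 := by linarith [sq_nonneg (‖v‖)]
        have hxq : x = q := by rw [← hzz, hveq, add_zero]
        have hxc : ⟪x, c⟫_ℝ = 0 := by rw [hxq]; exact hqc
        have hcx' : ⟪c, x⟫_ℝ = 0 := by rw [real_inner_comm]; exact hxc
        set θ : ℝ := min (1/2) ((μ-1)/(μ^2+‖c‖^2)) with hθdef
        have hd0 : (0:ℝ) < μ^2+‖c‖^2 := by
          linarith [sq_nonneg (‖c‖), sq_nonneg (μ-1)]
        have hθ0 : 0 < θ := lt_min (by norm_num) (div_pos (by linarith) hd0)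
        have hθh : θ ≤ 1/2 := min_le_left _ _
        have hθd : θ * (μ^2+‖c‖^2) ≤ μ - 1 := (le_div_iff₀ hd0).mp (min_le_right _ _)
        have hθ1 : (0:ℝ) < 1 - θ := by linarith
        set b0 : EuclideanSpace ℝ (Fin n) := (1-θ)⁻¹ • ((1-θ*μ) • x - θ • c) with hb0def
        have hb0sq : ‖b0‖^2 = ((1-θ)⁻¹)^2 * ((1-θ*μ)^2 * ‖x‖^2 + θ^2 * ‖c‖^2) := by
          rw [hb0def]
          simp only [← real_inner_self_eq_norm_sq]
          simp only [inner_sub_left, inner_sub_right, real_inner_smul_left,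
            real_inner_smul_right, hxc, hcx']
          ring
        have hkey : (1-θ*μ)^2 + θ^2*‖c‖^2 < (1-θ)^2 := by
          have p1 : θ * (θ * (μ^2+‖c‖^2)) ≤ θ * (μ - 1) :=
            mul_le_mul_of_nonneg_left hθd hθ0.le
          have p2 : 0 < θ * (μ - 1) := mul_pos hθ0 (by linarith)
          have p3 : 0 < θ * θ := mul_pos hθ0 hθ0
          have e1 : (1-θ*μ)^2 + θ^2*‖c‖^2
              = 1 - 2*(θ*μ) + θ*(θ*(μ^2+‖c‖^2)) := by ring
          have e2 : (1-θ)^2 = 1 - 2*θ + θ*θ := by ring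
          rw [e1, e2]
          linarith [p1, p2, p3]
        have hb0lt : ‖b0‖^2 < 1 := by
          rw [hb0sq, h1]
          have h3 : ((1-θ)⁻¹)^2 * ((1-θ*μ)^2 * 1 + θ^2*‖c‖^2)
              < ((1-θ)⁻¹)^2 * (1-θ)^2 := by
            apply mul_lt_mul_of_pos_left _ (by positivity)
            linarith
          have h4 : ((1-θ)⁻¹)^2 * (1-θ)^2 = 1 := by
            field_simp
          linarith
        have hb0int : b0 ∈ interior K :=
          hballK (mem_ball_zero_iff.mpr
            ((pow_lt_one_iff_of_nonneg (norm_nonneg b0) two_ne_zero).mp hb0lt))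
        have hp1K : μ • x + c ∈ K := hSK x hx (hxq ▸ hqU)
        have hxint : x ∈ interior K := by
          have hfold : x = (1-θ) • b0 + θ • (μ • x + c) := by
            rw [hb0def, smul_smul, mul_inv_cancel₀ (ne_of_gt hθ1), one_smul]
            module
          rw [hfold]
          exact hKconv.combo_interior_self_mem_interior hb0int hp1K hθ1 hθ0.le (by ring)
        have hyform2 : q + (β • v + t • c) = (1-t) • x + t • (q + c) := by
          rw [hveq, hxq, htdef]; module
        rw [hyform2]
        exact hKconv.combo_interior_self_mem_interior hxint hpK (by linarith) ht0.le (by ring)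
  constructor
  · intro x hx
    obtain ⟨y, hyK, hAy, -⟩ := key x (by rwa [mem_closedBall_zero_iff] at hx)
    exact ⟨y, hyK, hAy⟩
  · intro x hx hxf
    by_contra hpos
    push_neg at hpos
    obtain ⟨y, hyK, hAy, hint⟩ := key x (by rwa [mem_closedBall_zero_iff] at hx)
    have h1 : x ∈ interior (A '' K) := by
      have h2 : A y ∈ A '' interior K := Set.mem_image_of_mem _ (hint hpos)
      have h3 : A '' interior K ⊆ interior (A '' K) := hopen.image_interior_subset K
      rw [← hAy]
      exact h3 h2
    rw [← closure_diff_interior] at hxf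
    exact hxf.2 h1
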